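/- Let (P, W, c) be a witness Gabriel drawing of the complete 4-partite graph K_{2,2,2,2}, i.e., c : P → Fin 4 with every color class of size exactly 2 (so |P| = 8), with P ∪ W in general position. Then the points of P are in convex position: every p ∈ P satisfies p ∉ convexHull(P \ {p}). -/
import Mathlib


open scoped RealInnerProductSpace

noncomputable section

/-- The Euclidean plane. -/
abbrev Pt := EuclideanSpace ℝ (Fin 2)

/-- The closed disk with diameter `ab`. -/
def diskD (a b : Pt) : Set Pt := Metric.closedBall (midpoint ℝ a b) (dist a b / 2)

/-- `a` and `b` are adjacent in the witness Gabriel graph with witness set `W`. -/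
def gabrielEdge (W : Set Pt) (a b : Pt) : Prop := (diskD a b \ {a, b}) ∩ W = ∅

/-- General position: no three points collinear, no four points concyclic. -/
def GenPos (S : Set Pt) : Prop :=
  (∀ a ∈ S, ∀ b ∈ S, ∀ c ∈ S, a ≠ b → a ≠ c → b ≠ c → ¬ Collinear ℝ ({a, b, c} : Set Pt)) ∧
  (∀ a ∈ S, ∀ b ∈ S, ∀ c ∈ S, ∀ d ∈ S, a ≠ b → a ≠ c → a ≠ d → b ≠ c → b ≠ d → c ≠ d →
    ¬ EuclideanGeometry.Cospherical ({a, b, c, d} : Set Pt))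

/-- Planar determinant `u₁v₂ − u₂v₁`. -/
def det2 (u v : Pt) : ℝ := u 0 * v 1 - u 1 * v 0

/-- Counterclockwise convex position. -/
def CCWConvexPos {m : ℕ} (q : Fin m → Pt) : Prop :=
  ∀ i j k : Fin m, i < j → j < k → 0 < det2 (q j - q i) (q k - q i)

/-- Cyclic successor in `Fin m`. -/
def cyclicSucc {m : ℕ} (hm : 0 < m) (i : Fin m) : Fin m :=
  ⟨((i : ℕ) + 1) % m, Nat.mod_lt _ hm⟩

lemma mem_diskD_iff (a b w : Pt) : w ∈ diskD a b ↔ ⟪w - a, w - b⟫ ≤ 0 := by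
  set u := w - a with hu
  set v := w - b with hv
  have hmid : w - midpoint ℝ a b = (2:ℝ)⁻¹ • (u + v) := by
    have h2 : (2:ℝ)⁻¹ • w + (2:ℝ)⁻¹ • w = w := by
      rw [← add_smul]; norm_num
    rw [hu, hv, smul_add, smul_sub, smul_sub, midpoint_eq_smul_add, invOf_eq_inv, smul_add]
    nth_rewrite 1 [← h2]
    abel
  have hab : a - b = v - u := by rw [hu, hv]; abel
  have hkey : ‖u + v‖ ^ 2 - ‖v - u‖ ^ 2 = 4 * ⟪u, v⟫ := by
    have h1 := norm_add_sq_real u v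
    have h2 := norm_sub_sq_real v u
    have hcomm : ⟪u, v⟫ = ⟪v, u⟫ := real_inner_comm v u
    nlinarith [h1, h2, hcomm]
  have : w ∈ diskD a b ↔ ‖u + v‖ ≤ ‖v - u‖ := by
    rw [diskD, Metric.mem_closedBall, dist_eq_norm, dist_eq_norm, hmid, hab, norm_smul,
      show ‖((2:ℝ)⁻¹)‖ = (2:ℝ)⁻¹ from by norm_num]
    constructor
    · intro h; linarith
    · intro h; linarith
  rw [this]
  constructor
  · intro h
    nlinarith [norm_nonneg (u + v), norm_nonneg (v - u)]
  · intro h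
    nlinarith [norm_nonneg (u + v), norm_nonneg (v - u)]

/-- Any witness Gabriel drawing of `K_{2,2,2,2}` has its vertices in convex
position. -/
theorem K2222_vertices_in_convex_position
    (P W : Finset Pt) (c : Pt → Fin 4)
    (hcard : P.card = 8)
    (hsize : ∀ i : Fin 4, (P.filter (fun p => c p = i)).card = 2)
    (hgp : GenPos ((P : Set Pt) ∪ (W : Set Pt)))
    (hdraw : ∀ a ∈ P, ∀ b ∈ P, a ≠ b →
      (gabrielEdge (W : Set Pt) a b ↔ c a ≠ c b)) :
    ∀ p ∈ P, p ∉ convexHull ℝ ((P : Set Pt) \ {p}) := by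
  classical
  intro p hp hmem
  -- find the partner p' of p (same color class)
  have h2 : (P.filter (fun q => c q = c p)).card = 2 := hsize (c p)
  obtain ⟨p', hp'f, hp'ne⟩ :
      ∃ p' ∈ P.filter (fun q => c q = c p), p' ≠ p :=
    Finset.exists_mem_ne (by omega) p
  have hp'P : p' ∈ P := (Finset.mem_filter.1 hp'f).1
  have hcp' : c p' = c p := (Finset.mem_filter.1 hp'f).2
  -- non-edge p p' gives a witness w in the disk
  have hnoedge : ¬ gabrielEdge (W : Set Pt) p p' := by
    intro h
    exact (hdraw p hp p' hp'P hp'ne.symm).1 h hcp'.symm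
  have hne : ((diskD p p' \ {p, p'}) ∩ (W : Set Pt)).Nonempty := by
    rw [Set.nonempty_iff_ne_empty]
    exact hnoedge
  obtain ⟨w, hwd, hwW⟩ := hne
  obtain ⟨hwdisk, hwne⟩ := hwd
  have hwp : w ≠ p := fun h => hwne (by rw [h]; exact Set.mem_insert _ _)
  have hwp' : w ≠ p' := fun h => hwne (by rw [h]; exact Set.mem_insert_of_mem _ rfl)
  have hwpp' : ⟪w - p, w - p'⟫ ≤ 0 := (mem_diskD_iff p p' w).1 hwdisk
  -- every other vertex q has a different color, hence is adjacent to p'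
  have hq : ∀ q ∈ P, q ≠ p → q ≠ p' → (q = w ∨ 0 < ⟪w - p', w - q⟫) := by
    intro q hqP hqp hqp'
    have hcq : c q ≠ c p := by
      intro hEq
      have hsub : ({q, p', p} : Finset Pt) ⊆ P.filter (fun x => c x = c p) := by
        intro x hx
        simp only [Finset.mem_insert, Finset.mem_singleton] at hx
        rcases hx with rfl | rfl | rfl
        · exact Finset.mem_filter.2 ⟨hqP, hEq⟩
        · exact Finset.mem_filter.2 ⟨hp'P, hcp'⟩
        · exact Finset.mem_filter.2 ⟨hp, rfl⟩
      have h3 : ({q, p', p} : Finset Pt).card = 3 := by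
        rw [Finset.card_insert_of_notMem (by simp [hqp, hqp']),
          Finset.card_insert_of_notMem (by simp [hp'ne]), Finset.card_singleton]
      have := Finset.card_le_card hsub
      omega
    have hedge : gabrielEdge (W : Set Pt) p' q :=
      (hdraw p' hp'P q hqP (Ne.symm hqp')).2 (by rw [hcp']; exact fun h => hcq h.symm)
    by_cases hqw : q = w
    · exact Or.inl hqw
    · right
      by_contra hle
      push_neg at hle
      have hwin : w ∈ diskD p' q := (mem_diskD_iff p' q w).2 hle
      have : w ∈ (diskD p' q \ {p', q}) ∩ (W : Set Pt) := by
        refine ⟨⟨hwin, ?_⟩, hwW⟩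
        simp only [Set.mem_insert_iff, Set.mem_singleton_iff]
        push_neg
        exact ⟨hwp', fun h => hqw h.symm⟩
      rw [gabrielEdge] at hedge
      rw [hedge] at this
      exact this
  -- express p as a convex combination of P.erase p
  rw [← Finset.coe_erase, Finset.convexHull_eq] at hmem
  obtain ⟨f, hf0, hf1, hfc⟩ := hmem
  have hfc' : ∑ y ∈ P.erase p, f y • y = p := by
    rw [Finset.centerMass_eq_of_sum_1 _ id hf1] at hfc
    simpa using hfc
  have hwp2 : w - p = ∑ y ∈ P.erase p, f y • (w - y) := by
    have : ∑ y ∈ P.erase p, f y • (w - y)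
        = (∑ y ∈ P.erase p, f y) • w - ∑ y ∈ P.erase p, f y • y := by
      rw [Finset.sum_smul, ← Finset.sum_sub_distrib]
      congr 1
      ext y
      rw [smul_sub]
    rw [this, hf1, hfc', one_smul]
  -- the key sum
  have hsum : ∑ y ∈ P.erase p, f y * ⟪w - p', w - y⟫ ≤ 0 := by
    have : ⟪w - p', w - p⟫ = ∑ y ∈ P.erase p, f y * ⟪w - p', w - y⟫ := by
      rw [hwp2, inner_sum]
      congr 1
      ext y
      rw [real_inner_smul_right]
    rw [← this, real_inner_comm]
    exact hwpp'
  have hterm_nonneg : ∀ y ∈ P.erase p, 0 ≤ f y * ⟪w - p', w - y⟫ := by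
    intro y hy
    obtain ⟨hyp, hyP⟩ := Finset.mem_erase.1 hy
    by_cases hyp' : y = p'
    · subst hyp'
      exact mul_nonneg (hf0 y hy) (real_inner_self_nonneg)
    · rcases hq y hyP hyp hyp' with h | h
      · subst h
        simp
      · exact mul_nonneg (hf0 y hy) h.le
  have hsum0 : ∑ y ∈ P.erase p, f y * ⟪w - p', w - y⟫ = 0 :=
    le_antisymm hsum (Finset.sum_nonneg hterm_nonneg)
  have hterm0 : ∀ y ∈ P.erase p, f y * ⟪w - p', w - y⟫ = 0 :=
    (Finset.sum_eq_zero_iff_of_nonneg hterm_nonneg).1 hsum0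
  -- hence each term of the representation of w - p vanishes
  have hvec0 : ∀ y ∈ P.erase p, f y • (w - y) = 0 := by
    intro y hy
    obtain ⟨hyp, hyP⟩ := Finset.mem_erase.1 hy
    by_cases hfy : f y = 0
    · rw [hfy, zero_smul]
    · have ht : ⟪w - p', w - y⟫ = 0 := by
        have := hterm0 y hy
        rcases mul_eq_zero.1 this with h | h
        · exact absurd h hfy
        · exact h
      by_cases hyp' : y = p'
      · exfalso
        subst hyp'
        have : w - y = 0 := by
          have := inner_self_eq_zero.1 ht
          exact this
        exact hwp' (by rwa [sub_eq_zero] at this)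
      · rcases hq y hyP hyp hyp' with h | h
        · rw [h, sub_self, smul_zero]
        · exact absurd ht h.ne'
  have : w - p = 0 := by
    rw [hwp2]
    exact Finset.sum_eq_zero hvec0
  exact hwp (by rwa [sub_eq_zero] at this)
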